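/- Let κ, p, q, α ∈ ℝ and let P be analytic on the open unit disk 𝔻, with derivative P′. Write φ_α(z) = (1−z)^α (principal branch). Then for every (z₁, z₂) ∈ 𝔻 × 𝔻, 𝒫(D)[(w₁,w₂) ↦ φ_α(w₁) φ_α(w₂) P(w₁w₂)](z₁,z₂) = z₁z₂ (1−z₁)^{α−1} (1−z₂)^{α−1} ( κα² P(z₁z₂) − 2(1 − z₁z₂) P′(z₁z₂) ) + 𝒫(∂)[φ_α](z₁) · φ_α(z₂) P(z₁z₂) + 𝒫(∂)[φ_α](z₂) · φ_α(z₁) P(z₁z₂). -/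

import Mathlib

/-- The operator `L = z₁∂₁ − z₂∂₂` acting on functions of two complex variables. -/
noncomputable def opL (G : ℂ → ℂ → ℂ) : ℂ → ℂ → ℂ :=
  fun z₁ z₂ => z₁ * deriv (fun w => G w z₂) z₁ - z₂ * deriv (fun w => G z₁ w) z₂

/-- The two-variable Beliaev–Smirnov type operator `𝒫(D)` with parameters `κ, p, q`:
`𝒫(D)[G] = −(κ/2) L(L G) − ((1+z₁)/(1−z₁)) z₁∂₁G − ((1+z₂)/(1−z₂)) z₂∂₂G
  + (−p/(1−z₁)² − p/(1−z₂)² + q/(1−z₁) + q/(1−z₂) + 2p − 2q) G`. -/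
noncomputable def PD (κ p q : ℝ) (G : ℂ → ℂ → ℂ) (z₁ z₂ : ℂ) : ℂ :=
  -(κ / 2 : ℂ) * opL (opL G) z₁ z₂
    - ((1 + z₁) / (1 - z₁)) * (z₁ * deriv (fun w => G w z₂) z₁)
    - ((1 + z₂) / (1 - z₂)) * (z₂ * deriv (fun w => G z₁ w) z₂)
    + (-(p : ℂ) / (1 - z₁) ^ 2 - (p : ℂ) / (1 - z₂) ^ 2
        + (q : ℂ) / (1 - z₁) + (q : ℂ) / (1 - z₂) + 2 * (p : ℂ) - 2 * (q : ℂ)) * G z₁ z₂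

/-- The one-variable Beliaev–Smirnov type operator `𝒫(∂)` with parameters `κ, p, q`:
`𝒫(∂)[G](z) = −(κ/2)(z G′(z) + z² G″(z)) − ((1+z)/(1−z)) z G′(z)
  + (−p/(1−z)² + q/(1−z) + p − q) G(z)`. -/
noncomputable def Pd (κ p q : ℝ) (G : ℂ → ℂ) (z : ℂ) : ℂ :=
  -(κ / 2 : ℂ) * (z * deriv G z + z ^ 2 * deriv (deriv G) z)
    - ((1 + z) / (1 - z)) * (z * deriv G z)
    + (-(p : ℂ) / (1 - z) ^ 2 + (q : ℂ) / (1 - z) + (p : ℂ) - (q : ℂ)) * G z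

section bsAux

open Complex Metric Filter

private lemma bsAux_slit {z : ℂ} (hz : z ∈ Metric.ball (0:ℂ) 1) :
    (1 - z) ∈ Complex.slitPlane := by
  rw [Complex.mem_slitPlane_iff]
  left
  have h1 : ‖z‖ < 1 := by
    rwa [Metric.mem_ball, dist_zero_right] at hz
  have h2 : |z.re| < 1 := (Complex.abs_re_le_norm z).trans_lt h1
  have := abs_lt.mp h2
  simp only [Complex.sub_re, Complex.one_re]
  linarith [this.2]

private lemma bsAux_ne {z : ℂ} (hz : z ∈ Metric.ball (0:ℂ) 1) : (1 - z) ≠ 0 :=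
  Complex.slitPlane_ne_zero (bsAux_slit hz)

private lemma bsAux_mul {z₁ z₂ : ℂ} (h₁ : z₁ ∈ Metric.ball (0:ℂ) 1)
    (h₂ : z₂ ∈ Metric.ball (0:ℂ) 1) : z₁ * z₂ ∈ Metric.ball (0:ℂ) 1 := by
  rw [Metric.mem_ball, dist_zero_right] at *
  rw [norm_mul]
  nlinarith [norm_nonneg z₁, norm_nonneg z₂]

private lemma bsAux_osc (β : ℂ) {z : ℂ} (hz : z ∈ Metric.ball (0:ℂ) 1) :
    HasDerivAt (fun w : ℂ => (1 - w) ^ β) (-β * (1 - z) ^ (β - 1)) z := by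
  have h : HasDerivAt (fun w : ℂ => 1 - w) (-1) z := (hasDerivAt_id z).const_sub 1
  have := h.cpow_const (c := β) (by simpa using bsAux_slit hz)
  convert this using 1
  ring

private lemma bsAux_dd (α : ℝ) {z : ℂ} (hz : z ∈ Metric.ball (0:ℂ) 1) :
    deriv (deriv (fun w : ℂ => (1 - w) ^ (α : ℂ))) z
      = (α : ℂ) * ((α : ℂ) - 1) * (1 - z) ^ ((α : ℂ) - 2) := by
  have hev : deriv (fun w : ℂ => (1 - w) ^ (α : ℂ))
      =ᶠ[nhds z] fun w => -(α : ℂ) * (1 - w) ^ ((α : ℂ) - 1) := by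
    filter_upwards [Metric.isOpen_ball.mem_nhds hz] with w hw
    exact (bsAux_osc _ hw).deriv
  rw [hev.deriv_eq]
  have h := (bsAux_osc ((α : ℂ) - 1) hz).const_mul (-(α : ℂ))
  rw [h.deriv, show (α:ℂ)-1-1 = (α:ℂ)-2 from by ring]
  ring

private lemma bsAux_hc1 (P : ℂ → ℂ) (hP : AnalyticOnNhd ℂ P (Metric.ball (0:ℂ) 1))
    {z₁ z₂ : ℂ} (hz₁ : z₁ ∈ Metric.ball (0:ℂ) 1) (hz₂ : z₂ ∈ Metric.ball (0:ℂ) 1) :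
    HasDerivAt (fun w => P (w * z₂)) (deriv P (z₁ * z₂) * z₂) z₁ := by
  have hPd : HasDerivAt P (deriv P (z₁ * z₂)) (z₁ * z₂) :=
    ((hP _ (bsAux_mul hz₁ hz₂)).differentiableAt).hasDerivAt
  exact hPd.comp z₁ (hasDerivAt_mul_const z₂)

private lemma bsAux_hc2 (P : ℂ → ℂ) (hP : AnalyticOnNhd ℂ P (Metric.ball (0:ℂ) 1))
    {z₁ z₂ : ℂ} (hz₁ : z₁ ∈ Metric.ball (0:ℂ) 1) (hz₂ : z₂ ∈ Metric.ball (0:ℂ) 1) :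
    HasDerivAt (fun w => P (z₁ * w)) (deriv P (z₁ * z₂) * z₁) z₂ := by
  have hPd : HasDerivAt P (deriv P (z₁ * z₂)) (z₁ * z₂) :=
    ((hP _ (bsAux_mul hz₁ hz₂)).differentiableAt).hasDerivAt
  have hmul : HasDerivAt (fun w : ℂ => z₁ * w) z₁ z₂ := by
    simpa using (hasDerivAt_id z₂).const_mul z₁
  exact hPd.comp z₂ hmul

private lemma bsAux_L1 (α : ℝ) (P : ℂ → ℂ) (hP : AnalyticOnNhd ℂ P (Metric.ball (0:ℂ) 1))
    {z₁ z₂ : ℂ} (hz₁ : z₁ ∈ Metric.ball (0:ℂ) 1) (hz₂ : z₂ ∈ Metric.ball (0:ℂ) 1) :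
    deriv (fun w => (1 - w) ^ (α : ℂ) * (1 - z₂) ^ (α : ℂ) * P (w * z₂)) z₁
      = -(α : ℂ) * (1 - z₁) ^ ((α : ℂ) - 1) * (1 - z₂) ^ (α : ℂ) * P (z₁ * z₂)
        + (1 - z₁) ^ (α : ℂ) * (1 - z₂) ^ (α : ℂ) * (z₂ * deriv P (z₁ * z₂)) := by
  have h := ((bsAux_osc (α : ℂ) hz₁).mul_const ((1 - z₂) ^ (α : ℂ))).mul
    (bsAux_hc1 P hP hz₁ hz₂)
  exact h.deriv.trans (by ring)

private lemma bsAux_L2 (α : ℝ) (P : ℂ → ℂ) (hP : AnalyticOnNhd ℂ P (Metric.ball (0:ℂ) 1))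
    {z₁ z₂ : ℂ} (hz₁ : z₁ ∈ Metric.ball (0:ℂ) 1) (hz₂ : z₂ ∈ Metric.ball (0:ℂ) 1) :
    deriv (fun w => (1 - z₁) ^ (α : ℂ) * (1 - w) ^ (α : ℂ) * P (z₁ * w)) z₂
      = -(α : ℂ) * (1 - z₂) ^ ((α : ℂ) - 1) * (1 - z₁) ^ (α : ℂ) * P (z₁ * z₂)
        + (1 - z₁) ^ (α : ℂ) * (1 - z₂) ^ (α : ℂ) * (z₁ * deriv P (z₁ * z₂)) := by
  have h := ((bsAux_osc (α : ℂ) hz₂).const_mul ((1 - z₁) ^ (α : ℂ))).mul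
    (bsAux_hc2 P hP hz₁ hz₂)
  exact h.deriv.trans (by ring)

private lemma bsAux_opL (α : ℝ) (P : ℂ → ℂ) (hP : AnalyticOnNhd ℂ P (Metric.ball (0:ℂ) 1))
    {z₁ z₂ : ℂ} (hz₁ : z₁ ∈ Metric.ball (0:ℂ) 1) (hz₂ : z₂ ∈ Metric.ball (0:ℂ) 1) :
    opL (fun w₁ w₂ => (1 - w₁) ^ (α : ℂ) * (1 - w₂) ^ (α : ℂ) * P (w₁ * w₂)) z₁ z₂
      = (α : ℂ) * (z₂ * (1 - z₂) ^ ((α : ℂ) - 1) * (1 - z₁) ^ (α : ℂ)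
          - z₁ * (1 - z₁) ^ ((α : ℂ) - 1) * (1 - z₂) ^ (α : ℂ)) * P (z₁ * z₂) := by
  simp only [opL]
  rw [bsAux_L1 α P hP hz₁ hz₂, bsAux_L2 α P hP hz₁ hz₂]
  ring

private lemma bsAux_LL1 (α : ℝ) (P : ℂ → ℂ) (hP : AnalyticOnNhd ℂ P (Metric.ball (0:ℂ) 1))
    {z₁ z₂ : ℂ} (hz₁ : z₁ ∈ Metric.ball (0:ℂ) 1) (hz₂ : z₂ ∈ Metric.ball (0:ℂ) 1) :
    deriv (fun w => opL (fun w₁ w₂ => (1 - w₁) ^ (α : ℂ) * (1 - w₂) ^ (α : ℂ) * P (w₁ * w₂)) w z₂) z₁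
      = (α : ℂ) * ((z₂ * (1 - z₂) ^ ((α : ℂ) - 1)) * (-(α : ℂ) * (1 - z₁) ^ ((α : ℂ) - 1))
            - ((1 - z₁) ^ ((α : ℂ) - 1) + z₁ * (-((α : ℂ) - 1) * (1 - z₁) ^ ((α : ℂ) - 2)))
              * (1 - z₂) ^ (α : ℂ)) * P (z₁ * z₂)
        + (α : ℂ) * (z₂ * (1 - z₂) ^ ((α : ℂ) - 1) * (1 - z₁) ^ (α : ℂ)
            - z₁ * (1 - z₁) ^ ((α : ℂ) - 1) * (1 - z₂) ^ (α : ℂ)) * (z₂ * deriv P (z₁ * z₂)) := by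
  have hev : (fun w => opL (fun w₁ w₂ => (1 - w₁) ^ (α : ℂ) * (1 - w₂) ^ (α : ℂ) * P (w₁ * w₂)) w z₂)
      =ᶠ[nhds z₁] (fun w => (α : ℂ) * (z₂ * (1 - z₂) ^ ((α : ℂ) - 1) * (1 - w) ^ (α : ℂ)
          - w * (1 - w) ^ ((α : ℂ) - 1) * (1 - z₂) ^ (α : ℂ)) * P (w * z₂)) := by
    filter_upwards [Metric.isOpen_ball.mem_nhds hz₁] with w hw
    exact bsAux_opL α P hP hw hz₂
  rw [hev.deriv_eq]
  have hb : HasDerivAt (fun w : ℂ => w * (1 - w) ^ ((α : ℂ) - 1))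
      (1 * (1 - z₁) ^ ((α : ℂ) - 1) + z₁ * (-((α : ℂ) - 1) * (1 - z₁) ^ ((α : ℂ) - 1 - 1))) z₁ :=
    (hasDerivAt_id z₁).mul (bsAux_osc ((α : ℂ) - 1) hz₁)
  have h := ((((bsAux_osc (α : ℂ) hz₁).const_mul (z₂ * (1 - z₂) ^ ((α : ℂ) - 1))).sub
      (hb.mul_const ((1 - z₂) ^ (α : ℂ)))).const_mul (α : ℂ)).mul (bsAux_hc1 P hP hz₁ hz₂)
  refine h.deriv.trans ?_; rw [show (α:ℂ)-1-1 = (α:ℂ)-2 from by ring]; simp only [Pi.sub_apply]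
  ring

private lemma bsAux_LL2 (α : ℝ) (P : ℂ → ℂ) (hP : AnalyticOnNhd ℂ P (Metric.ball (0:ℂ) 1))
    {z₁ z₂ : ℂ} (hz₁ : z₁ ∈ Metric.ball (0:ℂ) 1) (hz₂ : z₂ ∈ Metric.ball (0:ℂ) 1) :
    deriv (fun w => opL (fun w₁ w₂ => (1 - w₁) ^ (α : ℂ) * (1 - w₂) ^ (α : ℂ) * P (w₁ * w₂)) z₁ w) z₂
      = (α : ℂ) * (((1 - z₂) ^ ((α : ℂ) - 1) + z₂ * (-((α : ℂ) - 1) * (1 - z₂) ^ ((α : ℂ) - 2)))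
              * (1 - z₁) ^ (α : ℂ)
            - (z₁ * (1 - z₁) ^ ((α : ℂ) - 1)) * (-(α : ℂ) * (1 - z₂) ^ ((α : ℂ) - 1))) * P (z₁ * z₂)
        + (α : ℂ) * (z₂ * (1 - z₂) ^ ((α : ℂ) - 1) * (1 - z₁) ^ (α : ℂ)
            - z₁ * (1 - z₁) ^ ((α : ℂ) - 1) * (1 - z₂) ^ (α : ℂ)) * (z₁ * deriv P (z₁ * z₂)) := by
  have hev : (fun w => opL (fun w₁ w₂ => (1 - w₁) ^ (α : ℂ) * (1 - w₂) ^ (α : ℂ) * P (w₁ * w₂)) z₁ w)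
      =ᶠ[nhds z₂] (fun w => (α : ℂ) * (w * (1 - w) ^ ((α : ℂ) - 1) * (1 - z₁) ^ (α : ℂ)
          - z₁ * (1 - z₁) ^ ((α : ℂ) - 1) * (1 - w) ^ (α : ℂ)) * P (z₁ * w)) := by
    filter_upwards [Metric.isOpen_ball.mem_nhds hz₂] with w hw
    exact bsAux_opL α P hP hz₁ hw
  rw [hev.deriv_eq]
  have hb : HasDerivAt (fun w : ℂ => w * (1 - w) ^ ((α : ℂ) - 1))
      (1 * (1 - z₂) ^ ((α : ℂ) - 1) + z₂ * (-((α : ℂ) - 1) * (1 - z₂) ^ ((α : ℂ) - 1 - 1))) z₂ :=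
    (hasDerivAt_id z₂).mul (bsAux_osc ((α : ℂ) - 1) hz₂)
  have hin := (hb.mul_const ((1 - z₁) ^ (α : ℂ))).sub
      ((bsAux_osc (α : ℂ) hz₂).const_mul (z₁ * (1 - z₁) ^ ((α : ℂ) - 1)))
  have h := (hin.const_mul (α : ℂ)).mul (bsAux_hc2 P hP hz₁ hz₂)
  refine h.deriv.trans ?_; rw [show (α:ℂ)-1-1 = (α:ℂ)-2 from by ring]; simp only [Pi.sub_apply]
  ring

set_option maxHeartbeats 1000000 in
lemma bsAux_alg (κ p q z₁ z₂ A B Pv Pv' a : ℂ) (hne₁ : 1 - z₁ ≠ 0) (hne₂ : 1 - z₂ ≠ 0) :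
            -(κ / 2) *
                      (z₁ *
                          (a *
                                (z₂ * (B * (1 - z₂)) * (-a * (A * (1 - z₁))) -
                                  (A * (1 - z₁) + z₁ * (-(a - 1) * A)) * (B * (1 - z₂) ^ 2)) *
                              Pv +
                            a * (z₂ * (B * (1 - z₂)) * (A * (1 - z₁) ^ 2) - z₁ * (A * (1 - z₁)) * (B * (1 - z₂) ^ 2)) *
                              (z₂ * Pv')) -
                        z₂ *
                          (a *
                                ((B * (1 - z₂) + z₂ * (-(a - 1) * B)) * (A * (1 - z₁) ^ 2) -
                                  z₁ * (A * (1 - z₁)) * (-a * (B * (1 - z₂)))) *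
                              Pv +
                            a * (z₂ * (B * (1 - z₂)) * (A * (1 - z₁) ^ 2) - z₁ * (A * (1 - z₁)) * (B * (1 - z₂) ^ 2)) *
                              (z₁ * Pv'))) -
                    (1 + z₁) / (1 - z₁) *
                      (z₁ *
                        (-a * (A * (1 - z₁)) * (B * (1 - z₂) ^ 2) * Pv +
                          A * (1 - z₁) ^ 2 * (B * (1 - z₂) ^ 2) * (z₂ * Pv'))) -
                  (1 + z₂) / (1 - z₂) *
                    (z₂ *
                      (-a * (B * (1 - z₂)) * (A * (1 - z₁) ^ 2) * Pv +
                        A * (1 - z₁) ^ 2 * (B * (1 - z₂) ^ 2) * (z₁ * Pv'))) +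
                (-p / (1 - z₁) ^ 2 - p / (1 - z₂) ^ 2 + q / (1 - z₁) + q / (1 - z₂) + 2 * p - 2 * q) *
                  (A * (1 - z₁) ^ 2 * (B * (1 - z₂) ^ 2) * Pv) =
              z₁ * z₂ * (A * (1 - z₁)) * (B * (1 - z₂)) * (κ * a ^ 2 * Pv - 2 * (1 - z₁ * z₂) * Pv') +
                  (-(κ / 2) * (z₁ * (-a * (A * (1 - z₁))) + z₁ ^ 2 * (a * (a - 1) * A)) -
                        (1 + z₁) / (1 - z₁) * (z₁ * (-a * (A * (1 - z₁)))) +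
                      (-p / (1 - z₁) ^ 2 + q / (1 - z₁) + p - q) * (A * (1 - z₁) ^ 2)) *
                    (B * (1 - z₂) ^ 2 * Pv) +
                (-(κ / 2) * (z₂ * (-a * (B * (1 - z₂))) + z₂ ^ 2 * (a * (a - 1) * B)) -
                      (1 + z₂) / (1 - z₂) * (z₂ * (-a * (B * (1 - z₂)))) +
                    (-p / (1 - z₂) ^ 2 + q / (1 - z₂) + p - q) * (B * (1 - z₂) ^ 2)) *
                  (A * (1 - z₁) ^ 2 * Pv) := by
  obtain ⟨u, rfl⟩ : ∃ u, z₁ = 1 - u := ⟨1 - z₁, by ring⟩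
  obtain ⟨v, rfl⟩ : ∃ v, z₂ = 1 - v := ⟨1 - z₂, by ring⟩
  have hu : u ≠ 0 := by simpa using hne₁
  have hv : v ≠ 0 := by simpa using hne₂
  have e1 : (1:ℂ) - (1 - u) = u := by ring
  have e2 : (1:ℂ) - (1 - v) = v := by ring
  rw [e1, e2]
  field_simp [hu, hv]
  ring

private lemma bsAux_split1 {z : ℂ} (hz : (1 - z) ≠ 0) (α : ℝ) :
    (1 - z) ^ ((α : ℂ) - 1) = (1 - z) ^ ((α : ℂ) - 2) * (1 - z) := by
  conv_lhs => rw [show (α : ℂ) - 1 = ((α : ℂ) - 2) + 1 from by ring]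
  rw [Complex.cpow_add _ _ hz, Complex.cpow_one]

private lemma bsAux_split2 {z : ℂ} (hz : (1 - z) ≠ 0) (α : ℝ) :
    (1 - z) ^ (α : ℂ) = (1 - z) ^ ((α : ℂ) - 2) * (1 - z) ^ (2 : ℕ) := by
  conv_lhs => rw [show (α : ℂ) = ((α : ℂ) - 2) + ((2 : ℕ) : ℂ) from by push_cast; ring]
  rw [Complex.cpow_add _ _ hz, Complex.cpow_natCast]
end bsAux

/-- Action of the two-variable operator `𝒫(D)` on factorized functions
`φ_α(z₁) φ_α(z₂) P(z₁z₂)`, where `φ_α(z) = (1−z)^α` (principal branch) and `P` is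
analytic on the unit disk. -/
theorem PD_on_factorized_function (κ p q α : ℝ) (P : ℂ → ℂ)
    (hP : AnalyticOnNhd ℂ P (Metric.ball (0:ℂ) 1)) :
    ∀ z₁ ∈ Metric.ball (0:ℂ) 1, ∀ z₂ ∈ Metric.ball (0:ℂ) 1,
      PD κ p q (fun w₁ w₂ => (1 - w₁) ^ (α : ℂ) * (1 - w₂) ^ (α : ℂ) * P (w₁ * w₂)) z₁ z₂
        = z₁ * z₂ * (1 - z₁) ^ ((α : ℂ) - 1) * (1 - z₂) ^ ((α : ℂ) - 1) *
            ((κ : ℂ) * (α : ℂ) ^ 2 * P (z₁ * z₂)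
              - 2 * (1 - z₁ * z₂) * deriv P (z₁ * z₂))
          + Pd κ p q (fun w => (1 - w) ^ (α : ℂ)) z₁ * ((1 - z₂) ^ (α : ℂ) * P (z₁ * z₂))
          + Pd κ p q (fun w => (1 - w) ^ (α : ℂ)) z₂ * ((1 - z₁) ^ (α : ℂ) * P (z₁ * z₂)) := by
  intro z₁ hz₁ z₂ hz₂
  have hne₁ := bsAux_ne hz₁
  have hne₂ := bsAux_ne hz₂
  simp only [PD, Pd]
  rw [show opL (opL (fun w₁ w₂ => (1 - w₁) ^ (α : ℂ) * (1 - w₂) ^ (α : ℂ) * P (w₁ * w₂))) z₁ z₂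
      = z₁ * deriv (fun w =>
          opL (fun w₁ w₂ => (1 - w₁) ^ (α : ℂ) * (1 - w₂) ^ (α : ℂ) * P (w₁ * w₂)) w z₂) z₁
        - z₂ * deriv (fun w =>
          opL (fun w₁ w₂ => (1 - w₁) ^ (α : ℂ) * (1 - w₂) ^ (α : ℂ) * P (w₁ * w₂)) z₁ w) z₂
      from rfl]
  rw [bsAux_LL1 α P hP hz₁ hz₂, bsAux_LL2 α P hP hz₁ hz₂,
    bsAux_L1 α P hP hz₁ hz₂, bsAux_L2 α P hP hz₁ hz₂,
    (bsAux_osc (α : ℂ) hz₁).deriv, (bsAux_osc (α : ℂ) hz₂).deriv,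
    bsAux_dd α hz₁, bsAux_dd α hz₂]
  rw [bsAux_split1 hne₁ α, bsAux_split2 hne₁ α, bsAux_split1 hne₂ α, bsAux_split2 hne₂ α]
  exact bsAux_alg (κ:ℂ) (p:ℂ) (q:ℂ) z₁ z₂ ((1 - z₁) ^ ((α : ℂ) - 2)) ((1 - z₂) ^ ((α : ℂ) - 2))
    (P (z₁ * z₂)) (deriv P (z₁ * z₂)) ((α : ℂ)) hne₁ hne₂
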